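/- Let α ∈ (0,1) and define h_α(m, n) = (c₆/(1−α)) m^α + c_n m² − c₆((2−α)/(1−α)) m − κ(n−6) and h₁(m, n) = c_n m² − c₆ m − c₆ m ln m − κ(n−6). Then for every m > 0 and n ≥ 3, |h_α(m, n) − h₁(m, n)| ≤ (c₆/2)(1 − α)(ln m)² max{1, m}. In particular, h_α converges to h₁ as α → 1⁻, locally uniformly in m and uniformly in n. -/

import Mathlib

open Real Set Filter

noncomputable def cFun (n : ℝ) : ℝ :=
  1 / (2 * n) * ((1 / 3) * Real.tan (π / n) + Real.cot (π / n))

noncomputable def c6 : ℝ := 5 / (18 * Real.sqrt 3)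

noncomputable def kappa : ℝ := 2 * π / 243 - 5 * Real.sqrt 3 / 324

noncomputable def hA (α m n : ℝ) : ℝ :=
  c6 / (1 - α) * m ^ α + cFun n * m ^ 2 - c6 * ((2 - α) / (1 - α)) * m - kappa * (n - 6)

noncomputable def h1 (m n : ℝ) : ℝ :=
  cFun n * m ^ 2 - c6 * m - c6 * m * Real.log m - kappa * (n - 6)


-- exp x ≤ 1 + x + x²/2 for x ≤ 0
lemma aux_exp_le (x : ℝ) (hx : x ≤ 0) : Real.exp x ≤ 1 + x + x ^ 2 / 2 := by
  have hderiv : ∀ y : ℝ, HasDerivAt (fun t => 1 + t + t ^ 2 / 2 - Real.exp t)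
      (1 + y - Real.exp y) y := by
    intro y
    have h := (((hasDerivAt_id y).const_add 1).add ((hasDerivAt_pow 2 y).div_const 2)).sub
      (Real.hasDerivAt_exp y)
    exact h.congr_deriv (by simp)
  have hanti : AntitoneOn (fun t => 1 + t + t ^ 2 / 2 - Real.exp t) (Set.Iic 0) := by
    apply antitoneOn_of_deriv_nonpos (convex_Iic 0)
    · exact (Continuous.continuousOn (by continuity))
    · intro y _
      exact (hderiv y).differentiableAt.differentiableWithinAt
    · intro y _
      rw [(hderiv y).deriv]
      have := Real.add_one_le_exp y
      linarith
  have h0 := hanti (Set.mem_Iic.mpr hx) (Set.mem_Iic.mpr le_rfl) hx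
  simp at h0
  linarith

-- exp x ≤ 1 + x + x²/2 · exp x for x ≥ 0
lemma aux_exp_ge (x : ℝ) (hx : 0 ≤ x) : Real.exp x ≤ 1 + x + x ^ 2 / 2 * Real.exp x := by
  have hderiv : ∀ y : ℝ, HasDerivAt (fun t => (1 + t) * Real.exp (-t) - 1 + t ^ 2 / 2)
      (-y * Real.exp (-y) + y) y := by
    intro y
    have he : HasDerivAt (fun t : ℝ => Real.exp (-t)) (-Real.exp (-y)) y := by
      exact ((Real.hasDerivAt_exp (-y)).comp y (hasDerivAt_neg y)).congr_deriv (by simp)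
    have h := ((((hasDerivAt_id y).const_add 1).mul he).sub_const 1).add
      ((hasDerivAt_pow 2 y).div_const 2)
    exact h.congr_deriv (by simp; ring)
  have hmono : MonotoneOn (fun t => (1 + t) * Real.exp (-t) - 1 + t ^ 2 / 2) (Set.Ici 0) := by
    apply monotoneOn_of_deriv_nonneg (convex_Ici 0)
    · exact (Continuous.continuousOn (by continuity))
    · intro y _
      exact (hderiv y).differentiableAt.differentiableWithinAt
    · intro y hy
      rw [(hderiv y).deriv]
      rw [interior_Ici] at hy
      have hy' : 0 < y := hy
      have h1 : Real.exp (-y) ≤ 1 := Real.exp_le_one_iff.mpr (by linarith)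
      nlinarith [Real.exp_pos (-y)]
  have h0 := hmono (Set.mem_Ici.mpr le_rfl) (Set.mem_Ici.mpr hx) hx
  simp at h0
  have hE : Real.exp (-x) * Real.exp x = 1 := by
    rw [← Real.exp_add]; simp
  nlinarith [Real.exp_pos x, mul_le_mul_of_nonneg_right h0 (Real.exp_pos x).le]

lemma aux_abs_exp (y : ℝ) : |Real.exp y - 1 - y| ≤ y ^ 2 / 2 * max 1 (Real.exp y) := by
  have hlow : 0 ≤ Real.exp y - 1 - y := by
    have := Real.add_one_le_exp y; linarith
  rw [abs_of_nonneg hlow]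
  rcases le_total y 0 with h | h
  · have h1 := aux_exp_le y h
    have h2 : (1 : ℝ) ≤ max 1 (Real.exp y) := le_max_left _ _
    nlinarith [sq_nonneg y]
  · have h1 := aux_exp_ge y h
    have h2 : Real.exp y ≤ max 1 (Real.exp y) := le_max_right _ _
    nlinarith [sq_nonneg y]

lemma c6_pos : 0 < c6 := by
  unfold c6
  have : (0:ℝ) < Real.sqrt 3 := Real.sqrt_pos.mpr (by norm_num)
  positivity

lemma core_ineq (α m : ℝ) (hα : α ∈ Set.Ioo (0:ℝ) 1) (hm : 0 < m) :
    |m ^ α - m + (1 - α) * m * Real.log m| ≤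
      (1 - α) ^ 2 / 2 * (Real.log m) ^ 2 * max 1 m := by
  obtain ⟨hα0, hα1⟩ := hα
  set y : ℝ := -((1 - α) * Real.log m) with hy
  have hma : m ^ α = m * Real.exp y := by
    rw [Real.rpow_def_of_pos hm]
    nth_rewrite 2 [← Real.exp_log hm]
    rw [← Real.exp_add]
    congr 1
    rw [hy]; ring
  have heq : m ^ α - m + (1 - α) * m * Real.log m = m * (Real.exp y - 1 - y) := by
    rw [hma, hy]; ring
  rw [heq, abs_mul, abs_of_pos hm]
  have hrpow : m ^ α ≤ max 1 m := by
    rcases le_total m 1 with h | h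
    · exact le_trans (Real.rpow_le_one hm.le h hα0.le) (le_max_left _ _)
    · calc m ^ α ≤ m ^ (1:ℝ) := Real.rpow_le_rpow_of_exponent_le h hα1.le
        _ = m := Real.rpow_one m
        _ ≤ max 1 m := le_max_right _ _
  calc m * |Real.exp y - 1 - y| ≤ m * (y ^ 2 / 2 * max 1 (Real.exp y)) :=
        mul_le_mul_of_nonneg_left (aux_abs_exp y) hm.le
    _ = y ^ 2 / 2 * (m * max 1 (Real.exp y)) := by ring
    _ = y ^ 2 / 2 * max (m * 1) (m * Real.exp y) := by
        rw [mul_max_of_nonneg _ _ hm.le]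
    _ = y ^ 2 / 2 * max m (m ^ α) := by rw [hma, mul_one]
    _ ≤ y ^ 2 / 2 * max 1 m := by
        apply mul_le_mul_of_nonneg_left _ (by positivity)
        exact max_le (le_max_right _ _) hrpow
    _ = (1 - α) ^ 2 / 2 * (Real.log m) ^ 2 * max 1 m := by rw [hy]; ring

/-- `|h_α(m,n) − h₁(m,n)| ≤ (c₆/2)(1−α)(ln m)² max{1,m}`; in particular `h_α → h₁`
as `α → 1⁻`, locally uniformly in `m` and uniformly in `n`. -/
theorem stmt9 :
    (∀ α ∈ Set.Ioo (0 : ℝ) 1, ∀ m : ℝ, 0 < m → ∀ n : ℝ, 3 ≤ n →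
      |hA α m n - h1 m n| ≤ c6 / 2 * (1 - α) * (Real.log m) ^ 2 * max 1 m) ∧
    (∀ m₁ m₂ : ℝ, 0 < m₁ → m₁ ≤ m₂ →
      TendstoUniformlyOn (fun (α : ℝ) (p : ℝ × ℝ) => hA α p.1 p.2)
        (fun p : ℝ × ℝ => h1 p.1 p.2) (nhdsWithin 1 (Set.Iio 1))
        (Set.Icc m₁ m₂ ×ˢ Set.Ici 3)) := by
  have H1 : ∀ α ∈ Set.Ioo (0 : ℝ) 1, ∀ m : ℝ, 0 < m → ∀ n : ℝ, 3 ≤ n →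
      |hA α m n - h1 m n| ≤ c6 / 2 * (1 - α) * (Real.log m) ^ 2 * max 1 m := by
    intro α hα m hm n _
    have hα1 : α < 1 := hα.2
    have hne : 1 - α ≠ 0 := by linarith
    have heq : hA α m n - h1 m n =
        c6 / (1 - α) * (m ^ α - m + (1 - α) * m * Real.log m) := by
      unfold hA h1
      field_simp
      ring
    rw [heq, abs_mul, abs_of_pos (div_pos c6_pos (by linarith))]
    calc c6 / (1 - α) * |m ^ α - m + (1 - α) * m * Real.log m|
          ≤ c6 / (1 - α) * ((1 - α) ^ 2 / 2 * (Real.log m) ^ 2 * max 1 m) := by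
            exact mul_le_mul_of_nonneg_left (core_ineq α m hα hm)
              (div_pos c6_pos (by linarith)).le
        _ = c6 / 2 * (1 - α) * (Real.log m) ^ 2 * max 1 m := by
            field_simp
  refine ⟨H1, ?_⟩
  intro m₁ m₂ hm₁ hm₁₂
  rw [Metric.tendstoUniformlyOn_iff]
  intro ε hε
  have hc6 := c6_pos
  set D : ℝ := c6 / 2 * (max |Real.log m₁| |Real.log m₂|) ^ 2 * max 1 m₂ with hDdef
  have hD0 : 0 ≤ D := by positivity
  have hD1 : 0 < D + 1 := by linarith
  have hmem : Set.Ioo (max 0 (1 - ε / (D + 1))) 1 ∈ nhdsWithin (1:ℝ) (Set.Iio 1) := by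
    apply Ioo_mem_nhdsLT_of_mem
    refine ⟨?_, le_rfl⟩
    apply max_lt one_pos
    have : 0 < ε / (D + 1) := div_pos hε hD1
    linarith
  filter_upwards [hmem] with α hα p hp
  have hα0 : 0 < α := lt_of_le_of_lt (le_max_left 0 _) hα.1
  have hα1 : α < 1 := hα.2
  have hαε : 1 - α < ε / (D + 1) := by
    have := lt_of_le_of_lt (le_max_right 0 (1 - ε / (D + 1))) hα.1
    linarith
  have hm : 0 < p.1 := lt_of_lt_of_le hm₁ hp.1.1
  have hkey := H1 α ⟨hα0, hα1⟩ p.1 hm p.2 hp.2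
  rw [Real.dist_eq, abs_sub_comm]
  have hL : (Real.log p.1) ^ 2 ≤ (max |Real.log m₁| |Real.log m₂|) ^ 2 := by
    rw [← sq_abs (Real.log p.1)]
    apply pow_le_pow_left₀ (abs_nonneg _)
    exact abs_le_max_abs_abs (Real.log_le_log hm₁ hp.1.1) (Real.log_le_log hm hp.1.2)
  have hM : max 1 p.1 ≤ max 1 m₂ := max_le_max le_rfl hp.1.2
  have hstep : c6 / 2 * (1 - α) * (Real.log p.1) ^ 2 * max 1 p.1 ≤ (1 - α) * D := by
    have h1α : (0:ℝ) ≤ 1 - α := by linarith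
    have hMp : (0:ℝ) ≤ max 1 p.1 := le_trans zero_le_one (le_max_left _ _)
    calc c6 / 2 * (1 - α) * (Real.log p.1) ^ 2 * max 1 p.1
        ≤ c6 / 2 * (1 - α) * (max |Real.log m₁| |Real.log m₂|) ^ 2 * max 1 p.1 := by
          apply mul_le_mul_of_nonneg_right _ hMp
          exact mul_le_mul_of_nonneg_left hL (by positivity)
      _ ≤ c6 / 2 * (1 - α) * (max |Real.log m₁| |Real.log m₂|) ^ 2 * max 1 m₂ := by
          apply mul_le_mul_of_nonneg_left hM
          positivity
      _ = (1 - α) * D := by rw [hDdef]; ring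
  have hfin : (1 - α) * D < ε := by
    have h2 : (1 - α) * (D + 1) < ε := by
      rw [← lt_div_iff₀ hD1] at *
      linarith
    nlinarith
  exact lt_of_le_of_lt (le_trans hkey hstep) hfin
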